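/- Let M be a unital associative algebra over ℂ, let τ : M → ℂ be a linear functional, let A and B be unital subalgebras of M, let D be a unital subalgebra of A ∩ B, and let E_A : A → D and E_B : B → D be conditional expectations. Write A ⊖ D = A ∩ ker E_A and B ⊖ D = B ∩ ker E_B, and assume Λ°(A ⊖ D, B ⊖ D) ⊆ ker τ (freeness of A and B with amalgamation over D with respect to τ). Let Θ be the set of all elements of M expressible as a product of a sequence alternating between A ⊖ D and B ⊖ D whose first and last factors lie in B ⊖ D, and let C ⊆ A ∩ ker E_A be any subset. Then Λ°(Θ, C) ⊆ ker τ. -/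

import Mathlib

/-- `altSet X Y` is Λ°(X, Y): the set of all products `c₁c₂⋯cₙ`, `n ≥ 1`, where each
factor lies in `X` or in `Y` and consecutive factors come from different sets. -/
def altSet {M : Type*} [Monoid M] (X Y : Set M) : Set M :=
  { m | ∃ (n : ℕ) (_hn : 0 < n) (c : Fin n → M) (lab : Fin n → Bool),
      (∀ j, if lab j then c j ∈ X else c j ∈ Y) ∧
      (∀ (j : ℕ) (h : j + 1 < n),
        lab ⟨j, Nat.lt_of_succ_lt h⟩ ≠ lab ⟨j + 1, h⟩) ∧
      m = (List.ofFn c).prod }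

/-- `altEnds X Y fb lb` is the set of alternating products in `(X, Y)` whose first
factor comes from `X` (if `fb = true`) or from `Y` (if `fb = false`), and similarly
for the last factor according to `lb`. -/
def altEnds {M : Type*} [Monoid M] (X Y : Set M) (fb lb : Bool) : Set M :=
  { m | ∃ (n : ℕ) (hn : 0 < n) (c : Fin n → M) (lab : Fin n → Bool),
      (∀ j, if lab j then c j ∈ X else c j ∈ Y) ∧
      (∀ (j : ℕ) (h : j + 1 < n),
        lab ⟨j, Nat.lt_of_succ_lt h⟩ ≠ lab ⟨j + 1, h⟩) ∧
      lab ⟨0, hn⟩ = fb ∧ lab ⟨n - 1, Nat.sub_lt hn Nat.one_pos⟩ = lb ∧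
      m = (List.ofFn c).prod }

section helpers
variable {M : Type*} [Monoid M] {X Y : Set M}

def okList (X Y : Set M) (L : List (M × Bool)) : Prop :=
  (∀ p ∈ L, if p.2 then p.1 ∈ X else p.1 ∈ Y) ∧
    L.Chain' (fun p q => p.2 ≠ q.2)

lemma mem_altEnds_list {L : List (M × Bool)} (hL : L ≠ []) (hok : okList X Y L) :
    (L.map Prod.fst).prod ∈ altEnds X Y (L.head hL).2 (L.getLast hL).2 := by
  have hlen : 0 < L.length := List.length_pos_iff.mpr hL
  refine ⟨L.length, hlen, fun j => (L.get j).1, fun j => (L.get j).2,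
    fun j => hok.1 _ (L.get_mem ..), ?_, ?_, ?_, ?_⟩
  · intro j h
    exact List.isChain_iff_getElem.mp hok.2 j (by omega)
  · simp [List.head_eq_getElem, List.get_eq_getElem]
  · simp [List.getLast_eq_getElem, List.get_eq_getElem]
  · rw [show (fun j => (L.get j).1) = Prod.fst ∘ L.get from rfl,
      ← List.map_ofFn, List.ofFn_get]

lemma exists_list_of_mem_altEnds {m : M} {fb lb : Bool} (h : m ∈ altEnds X Y fb lb) :
    ∃ (L : List (M × Bool)) (hL : L ≠ []), okList X Y L ∧
      (L.head hL).2 = fb ∧ (L.getLast hL).2 = lb ∧ m = (L.map Prod.fst).prod := by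
  obtain ⟨n, hn, c, lab, h1, h2, h3, h4, h5⟩ := h
  set L : List (M × Bool) := List.ofFn (fun j => (c j, lab j)) with hLdef
  have hlen : L.length = n := List.length_ofFn
  have hL : L ≠ [] := by
    intro hnil; rw [hnil] at hlen; simp at hlen; omega
  have hget : ∀ (i : ℕ) (hi : i < L.length),
      L[i] = (c ⟨i, by omega⟩, lab ⟨i, by omega⟩) := by
    intro i hi
    simp only [hLdef, List.getElem_ofFn]
  refine ⟨L, hL, ⟨?_, ?_⟩, ?_, ?_, ?_⟩
  · intro p hp
    rw [hLdef, List.mem_ofFn] at hp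
    obtain ⟨i, rfl⟩ := hp
    exact h1 i
  · rw [List.Chain', List.isChain_iff_getElem]
    intro i hi
    rw [hget i (by omega),
      hget (i + 1) (by omega)]
    exact h2 i (by omega)
  · rw [List.head_eq_getElem, hget 0 (by omega)]
    exact h3
  · rw [List.getLast_eq_getElem, hget (L.length - 1) (by omega)]
    have : (⟨L.length - 1, by omega⟩ : Fin n) = ⟨n - 1, Nat.sub_lt hn Nat.one_pos⟩ :=
      Fin.ext (by simp [hlen])
    rw [this]
    exact h4
  · rw [hLdef, List.map_ofFn]
    exact h5

lemma altEnds_subset_altSet {fb lb : Bool} : altEnds X Y fb lb ⊆ altSet X Y := by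
  rintro m ⟨n, hn, c, lab, h1, h2, _, _, h5⟩
  exact ⟨n, hn, c, lab, h1, h2, h5⟩

lemma exists_ends_of_mem_altSet {m : M} (h : m ∈ altSet X Y) :
    ∃ fb lb, m ∈ altEnds X Y fb lb := by
  obtain ⟨n, hn, c, lab, h1, h2, h5⟩ := h
  exact ⟨lab ⟨0, hn⟩, lab ⟨n - 1, Nat.sub_lt hn Nat.one_pos⟩,
    n, hn, c, lab, h1, h2, rfl, rfl, h5⟩

lemma mem_altEnds_singleton_X {x : M} (hx : x ∈ X) : x ∈ altEnds X Y true true :=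
  ⟨1, one_pos, fun _ => x, fun _ => true, fun _ => by simpa using hx,
    fun j h => by omega, rfl, rfl, by simp⟩

lemma altEnds_mul {m₁ m₂ : M} {f₁ l₁ f₂ l₂ : Bool} (h₁ : m₁ ∈ altEnds X Y f₁ l₁)
    (h₂ : m₂ ∈ altEnds X Y f₂ l₂) (hne : l₁ ≠ f₂) :
    m₁ * m₂ ∈ altEnds X Y f₁ l₂ := by
  obtain ⟨L₁, hL₁, ok₁, hh₁, hl₁, rfl⟩ := exists_list_of_mem_altEnds h₁
  obtain ⟨L₂, hL₂, ok₂, hh₂, hl₂, rfl⟩ := exists_list_of_mem_altEnds h₂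
  have hA : L₁ ++ L₂ ≠ [] := by simp [hL₁]
  have hok : okList X Y (L₁ ++ L₂) := by
    refine ⟨?_, ok₁.2.append ok₂.2 ?_⟩
    · intro p hp
      rcases List.mem_append.mp hp with h | h
      exacts [ok₁.1 p h, ok₂.1 p h]
    · intro x hx y hy
      rw [List.getLast?_eq_getLast hL₁, Option.mem_some_iff] at hx
      rw [List.head?_eq_head hL₂, Option.mem_some_iff] at hy
      subst hx hy
      rw [hl₁, hh₂]
      exact hne
  have key := mem_altEnds_list hA hok
  have hhead : ((L₁ ++ L₂).head hA).2 = f₁ := by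
    rw [List.head_append]
    simp [List.isEmpty_iff, hL₁, hh₁]
  have hlast : ((L₁ ++ L₂).getLast hA).2 = l₂ := by
    rw [List.getLast_append]
    simp [List.isEmpty_iff, hL₂, hl₂]
  rw [hhead, hlast, List.map_append, List.prod_append] at key
  exact key

lemma key_theta {C : Set M} (hC : C ⊆ X) :
    ∀ (L : List (M × Bool)) (hL : L ≠ []),
      okList (altEnds X Y false false) C L →
      (L.map Prod.fst).prod ∈
        altEnds X Y (!(L.head hL).2) (!(L.getLast hL).2)
  | [p], _, ok => by
    have hp := ok.1 p (List.mem_singleton_self p)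
    simp only [List.map_cons, List.map_nil, List.prod_cons, List.prod_nil, mul_one,
      List.head_cons, List.getLast_singleton]
    cases hb : p.2 with
    | false =>
      rw [hb] at hp; simp at hp
      simpa using mem_altEnds_singleton_X (X := X) (Y := Y) (hC hp)
    | true =>
      rw [hb] at hp; simp at hp
      simpa using hp
  | p :: q :: rest, _, ok => by
    have hne : p.2 ≠ q.2 := (List.isChain_cons_cons.mp ok.2).1
    have okt : okList (altEnds X Y false false) C (q :: rest) :=
      ⟨fun r hr => ok.1 r (List.mem_cons_of_mem _ hr), (List.isChain_cons_cons.mp ok.2).2⟩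
    have ih := key_theta hC (q :: rest) (by simp) okt
    have hp := ok.1 p (List.mem_cons_self ..)
    have hpmem : p.1 ∈ altEnds X Y (!p.2) (!p.2) := by
      cases hb : p.2 with
      | false =>
        rw [hb] at hp; simp at hp
        simpa using mem_altEnds_singleton_X (X := X) (Y := Y) (hC hp)
      | true =>
        rw [hb] at hp; simp at hp
        simpa using hp
    have hmul := altEnds_mul hpmem ih (by simpa using hne)
    have hlast : (p :: q :: rest).getLast (by simp) = (q :: rest).getLast (by simp) :=
      List.getLast_cons _
    simp only [List.map_cons, List.prod_cons] at hmul ⊢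
    rw [List.head_cons, hlast]
    exact hmul

end helpers

/-- Freeness verification: if `A` and `B` are free with amalgamation over `D` with
respect to `τ` (i.e. `Λ°(A ⊖ D, B ⊖ D) ⊆ ker τ`), `Θ` is the set of alternating words
in `(A ⊖ D, B ⊖ D)` beginning and ending with letters from `B ⊖ D`, and
`C ⊆ A ∩ ker E_A`, then `Λ°(Θ, C) ⊆ ker τ`. -/
theorem altSet_theta_subset_ker {M : Type*} [Ring M] [Algebra ℂ M]
    (τ : M →ₗ[ℂ] ℂ)
    (A B D : Subalgebra ℂ M) (hDA : D ≤ A) (hDB : D ≤ B)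
    (EA : ↥A →ₗ[ℂ] ↥D) (EB : ↥B →ₗ[ℂ] ↥D)
    (hEA1 : ∀ d : ↥D, EA ⟨(d : M), hDA d.2⟩ = d)
    (hEA2 : ∀ (d₁ d₂ : ↥D) (a : ↥A),
      ((EA (⟨(d₁ : M), hDA d₁.2⟩ * a * ⟨(d₂ : M), hDA d₂.2⟩) : ↥D) : M)
        = (d₁ : M) * ((EA a : ↥D) : M) * (d₂ : M))
    (hEB1 : ∀ d : ↥D, EB ⟨(d : M), hDB d.2⟩ = d)
    (hEB2 : ∀ (d₁ d₂ : ↥D) (b : ↥B),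
      ((EB (⟨(d₁ : M), hDB d₁.2⟩ * b * ⟨(d₂ : M), hDB d₂.2⟩) : ↥D) : M)
        = (d₁ : M) * ((EB b : ↥D) : M) * (d₂ : M))
    (hfree : altSet { x : M | ∃ hx : x ∈ A, EA ⟨x, hx⟩ = 0 }
                    { x : M | ∃ hx : x ∈ B, EB ⟨x, hx⟩ = 0 } ⊆ { x : M | τ x = 0 })
    (C : Set M)
    (hC : C ⊆ { x : M | ∃ hx : x ∈ A, EA ⟨x, hx⟩ = 0 }) :
    altSet (altEnds { x : M | ∃ hx : x ∈ A, EA ⟨x, hx⟩ = 0 }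
                    { x : M | ∃ hx : x ∈ B, EB ⟨x, hx⟩ = 0 } false false) C
      ⊆ { x : M | τ x = 0 } := by
  intro m hm
  obtain ⟨fb, lb, hm⟩ := exists_ends_of_mem_altSet hm
  obtain ⟨L, hL, hok, -, -, rfl⟩ := exists_list_of_mem_altEnds hm
  exact hfree (altEnds_subset_altSet (key_theta hC L hL hok))
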